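/- Let X be a real Hilbert space, B a bounded subset of X, and f : B → ℝ, G : B → X functions with G bounded, satisfying condition (C): f(x) ≥ f(y) + ⟨G(y), x − y⟩ for all x, y ∈ B, and condition (SCW¹): for all sequences (x_n), (y_n) in B, if f(x_n) − f(y_n) − ⟨G(y_n), x_n − y_n⟩ → 0 then G(x_n) − G(y_n) → 0. Then there exist a concave, nondecreasing, continuous function ω : [0, ∞) → [0, ∞) with ω(0) = 0, a constant M > 0, and a convex differentiable function F : X → ℝ such that F = f on B, ∇F = G on B, and ‖∇F(x) − ∇F(z)‖ ≤ M·ω(‖x − z‖) for all x, z ∈ X (i.e., F ∈ C^{1,ω}(X)). -/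

import Mathlib

open Set Filter

local notation "⟪" x ", " y "⟫" => @inner ℝ _ _ x y

section Construction

variable {X : Type*} [NormedAddCommGroup X] [InnerProductSpace ℝ X]

variable (B : Set X) (f : X → ℝ) (G : X → X) (L : ℝ)

/-- Set of "gaps" between pairs of points whose gradients differ by at least `s`,
with an artificial element `1` to ensure nonemptiness. -/
def gapSet (s : ℝ) : Set ℝ :=
  insert 1 {r | ∃ u ∈ B, ∃ v ∈ B, s ≤ ‖G u - G v‖ ∧ r = f u - f v - ⟪G v, u - v⟫}

noncomputable def eta (s : ℝ) : ℝ := sInf (gapSet B f G s)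

def zSet (r : ℝ) : Set ℝ :=
  insert 0 {s | (0 < s ∧ s ≤ 2 * L) ∧ eta B f G s ≤ s * r}

noncomputable def zeta (r : ℝ) : ℝ := sSup (zSet B f G L r)

/-- Admissible affine majorants of `2 * zeta`. -/
def omAff : Set (ℝ × ℝ) :=
  {ab | 0 ≤ ab.1 ∧ 0 ≤ ab.2 ∧ ∀ r, 0 ≤ r → 2 * zeta B f G L r ≤ ab.1 * r + ab.2}

/-- The modulus of continuity: least affine-majorant envelope of `2 * zeta`. -/
noncomputable def om (t : ℝ) : ℝ :=
  sInf ((fun ab : ℝ × ℝ => ab.1 * max t 0 + ab.2) '' omAff B f G L)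

noncomputable def phi (r : ℝ) : ℝ := ∫ s in (0:ℝ)..r, om B f G L s

noncomputable def gfun (x : X) : ℝ :=
  sInf ((fun y => f y + ⟪G y, x - y⟫ + phi B f G L ‖x - y‖) '' B)

/-- Finite convex combinations representation set for the convex envelope. -/
def CombSet (x : X) : Set ℝ :=
  {r | ∃ (t : Finset X) (w : X → ℝ), (∀ p, 0 ≤ w p) ∧ (∀ p, p ∉ t → w p = 0) ∧
    (∑ p ∈ t, w p) = 1 ∧ (∑ p ∈ t, w p • p) = x ∧ r = ∑ p ∈ t, w p * gfun B f G L p}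

noncomputable def Ffun (x : X) : ℝ := sInf (CombSet B f G L x)

end Construction


section ModulusLemmas

variable {X : Type*} [NormedAddCommGroup X] [InnerProductSpace ℝ X]
variable {B : Set X} {f : X → ℝ} {G : X → X} {L : ℝ}

lemma gap_nonneg (hC : ∀ x ∈ B, ∀ y ∈ B, f x ≥ f y + ⟪G y, x - y⟫)
    {u v : X} (hu : u ∈ B) (hv : v ∈ B) : 0 ≤ f u - f v - ⟪G v, u - v⟫ := by
  have := hC u hu v hv; linarith

lemma gapSet_lb (hC : ∀ x ∈ B, ∀ y ∈ B, f x ≥ f y + ⟪G y, x - y⟫) {s : ℝ}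
    {r : ℝ} (hr : r ∈ gapSet B f G s) : 0 ≤ r := by
  rcases hr with h | ⟨u, hu, v, hv, _, rfl⟩
  · simp [h]
  · exact gap_nonneg hC hu hv

lemma gapSet_bddBelow (hC : ∀ x ∈ B, ∀ y ∈ B, f x ≥ f y + ⟪G y, x - y⟫) (s : ℝ) :
    BddBelow (gapSet B f G s) := ⟨0, fun r hr => gapSet_lb hC hr⟩

lemma eta_nonneg (hC : ∀ x ∈ B, ∀ y ∈ B, f x ≥ f y + ⟪G y, x - y⟫) (s : ℝ) :
    0 ≤ eta B f G s :=
  le_csInf ⟨1, Set.mem_insert _ _⟩ fun r hr => gapSet_lb hC hr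

lemma eta_le_one (hC : ∀ x ∈ B, ∀ y ∈ B, f x ≥ f y + ⟪G y, x - y⟫) (s : ℝ) :
    eta B f G s ≤ 1 :=
  csInf_le (gapSet_bddBelow hC s) (Or.inl rfl)

lemma eta_le_gap (hC : ∀ x ∈ B, ∀ y ∈ B, f x ≥ f y + ⟪G y, x - y⟫)
    {s : ℝ} {u v : X} (hu : u ∈ B) (hv : v ∈ B) (hs : s ≤ ‖G u - G v‖) :
    eta B f G s ≤ f u - f v - ⟪G v, u - v⟫ :=
  csInf_le (gapSet_bddBelow hC s) (Or.inr ⟨u, hu, v, hv, hs, rfl⟩)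

lemma eta_mono (hC : ∀ x ∈ B, ∀ y ∈ B, f x ≥ f y + ⟪G y, x - y⟫)
    {s s' : ℝ} (h : s ≤ s') : eta B f G s ≤ eta B f G s' := by
  apply csInf_le_csInf (gapSet_bddBelow hC s) ⟨1, Set.mem_insert _ _⟩
  rintro r (h1 | ⟨u, hu, v, hv, hsu, rfl⟩)
  · exact Or.inl h1
  · exact Or.inr ⟨u, hu, v, hv, le_trans h hsu, rfl⟩

lemma eta_pos (hC : ∀ x ∈ B, ∀ y ∈ B, f x ≥ f y + ⟪G y, x - y⟫)
    (hSCW1 : ∀ x y : ℕ → X, (∀ n, x n ∈ B) → (∀ n, y n ∈ B) →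
      Tendsto (fun n => f (x n) - f (y n) - ⟪G (y n), x n - y n⟫) atTop (nhds 0) →
      Tendsto (fun n => G (x n) - G (y n)) atTop (nhds 0))
    {s : ℝ} (hs : 0 < s) : 0 < eta B f G s := by
  rcases lt_or_ge 0 (eta B f G s) with h | h
  · exact h
  exfalso
  have heq : eta B f G s = 0 := le_antisymm h (eta_nonneg hC s)
  -- for every n, find an element of the gap set below 1/(n+1)
  have hex : ∀ n : ℕ, ∃ u v : X, u ∈ B ∧ v ∈ B ∧ s ≤ ‖G u - G v‖ ∧
      f u - f v - ⟪G v, u - v⟫ < 1 / (n + 1) := by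
    intro n
    have hpos : (0:ℝ) < 1 / (n + 1) := by positivity
    have hlt : sInf (gapSet B f G s) < 1 / (n+1) := by rw [show sInf (gapSet B f G s) = eta B f G s from rfl, heq]; exact hpos
    obtain ⟨r, hr, hrlt⟩ := exists_lt_of_csInf_lt ⟨1, Set.mem_insert _ _⟩ hlt
    rcases hr with h1 | ⟨u, hu, v, hv, hsu, rfl⟩
    · exfalso
      have : (1:ℝ)/(n+1) ≤ 1 := by
        rw [div_le_one (by positivity)]; linarith [Nat.cast_nonneg (α := ℝ) n]
      subst h1; linarith
    · exact ⟨u, v, hu, hv, hsu, hrlt⟩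
  choose u v hu hv hsn hlt using hex
  have htend : Tendsto (fun n => f (u n) - f (v n) - ⟪G (v n), u n - v n⟫) atTop (nhds 0) := by
    have h0 : Tendsto (fun n : ℕ => (0:ℝ)) atTop (nhds 0) := tendsto_const_nhds
    have h1 : Tendsto (fun n : ℕ => 1 / ((n:ℝ) + 1)) atTop (nhds 0) :=
      tendsto_one_div_add_atTop_nhds_zero_nat
    refine tendsto_of_tendsto_of_tendsto_of_le_of_le h0 h1 ?_ ?_
    · intro n; exact gap_nonneg hC (hu n) (hv n)
    · intro n; exact le_of_lt (hlt n)
  have hG := hSCW1 u v hu hv htend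
  have hnorm : Tendsto (fun n => ‖G (u n) - G (v n)‖) atTop (nhds 0) := by
    simpa using hG.norm
  have hev := hnorm (Iio_mem_nhds hs)
  rw [mem_map, mem_atTop_sets] at hev
  obtain ⟨N, hN⟩ := hev
  exact absurd (hsn N) (not_le.mpr (hN N le_rfl))

lemma zSet_bddAbove (hL0 : 0 ≤ L) (r : ℝ) : BddAbove (zSet B f G L r) := by
  refine ⟨2 * L, ?_⟩
  rintro x (rfl | ⟨⟨_, hle⟩, _⟩)
  · linarith
  · exact hle

lemma zeta_nonneg (r : ℝ) : 0 ≤ zeta B f G L r := by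
  by_cases hL0 : 0 ≤ L
  · exact le_csSup (zSet_bddAbove hL0 r) (Or.inl rfl)
  · -- if L < 0 the non-insert part is empty
    have : zSet B f G L r = {0} := by
      ext x
      constructor
      · rintro (rfl | ⟨⟨h1, h2⟩, _⟩)
        · rfl
        · exfalso; push_neg at hL0; linarith
      · rintro rfl; exact Or.inl rfl
    rw [zeta, this, csSup_singleton]

lemma zeta_le_2L (hL0 : 0 ≤ L) (r : ℝ) : zeta B f G L r ≤ 2 * L := by
  apply csSup_le ⟨0, Set.mem_insert _ _⟩
  rintro x (rfl | ⟨⟨_, hle⟩, _⟩)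
  · linarith
  · exact hle

lemma le_zeta (hL0 : 0 ≤ L) {s r : ℝ} (hs : 0 < s) (hsL : s ≤ 2 * L)
    (h : eta B f G s ≤ s * r) : s ≤ zeta B f G L r :=
  le_csSup (zSet_bddAbove hL0 r) (Or.inr ⟨⟨hs, hsL⟩, h⟩)

lemma zeta_small (hC : ∀ x ∈ B, ∀ y ∈ B, f x ≥ f y + ⟪G y, x - y⟫)
    {s₀ r : ℝ} (hs₀ : 0 < s₀) (hr : 0 ≤ r)
    (hcond : 2 * L * r < eta B f G s₀) : zeta B f G L r ≤ s₀ := by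
  apply csSup_le ⟨0, Set.mem_insert _ _⟩
  rintro x (rfl | ⟨⟨h1, h2⟩, h3⟩)
  · exact le_of_lt hs₀
  · by_contra hgt
    push_neg at hgt
    have hmono := eta_mono hC (le_of_lt hgt)
    have : x * r ≤ 2 * L * r := mul_le_mul_of_nonneg_right h2 hr
    linarith

end ModulusLemmas


section OmLemmas

variable {X : Type*} [NormedAddCommGroup X] [InnerProductSpace ℝ X]
variable {B : Set X} {f : X → ℝ} {G : X → X} {L : ℝ}

lemma omAff_mem (hL0 : 0 ≤ L) : ((0:ℝ), 4*L+1) ∈ omAff B f G L := by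
  refine ⟨le_rfl, show (0:ℝ) ≤ 4*L+1 by linarith, fun r hr => ?_⟩
  have := zeta_le_2L (B := B) (f := f) (G := G) hL0 r
  simp only
  linarith

lemma omAff_nonempty (hL0 : 0 ≤ L) : (omAff B f G L).Nonempty := ⟨_, omAff_mem hL0⟩

lemma om_lb (t : ℝ) {v : ℝ}
    (hv : v ∈ (fun ab : ℝ × ℝ => ab.1 * max t 0 + ab.2) '' omAff B f G L) : 0 ≤ v := by
  obtain ⟨ab, ⟨ha, hb, _⟩, rfl⟩ := hv
  have h0 : (0:ℝ) ≤ max t 0 := le_max_right _ _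
  positivity

lemma om_bddBelow (t : ℝ) :
    BddBelow ((fun ab : ℝ × ℝ => ab.1 * max t 0 + ab.2) '' omAff B f G L) :=
  ⟨0, fun v hv => om_lb t hv⟩

lemma om_nonneg (hL0 : 0 ≤ L) (t : ℝ) : 0 ≤ om B f G L t :=
  le_csInf ((omAff_nonempty (B := B) (f := f) (G := G) hL0).image _) fun v hv => om_lb t hv

lemma om_le_aff {a b : ℝ} (hab : (a, b) ∈ omAff B f G L) (t : ℝ) :
    om B f G L t ≤ a * max t 0 + b :=
  csInf_le (om_bddBelow t) ⟨(a, b), hab, rfl⟩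

lemma om_bound (hL0 : 0 ≤ L) (t : ℝ) : om B f G L t ≤ 4*L+1 := by
  have := om_le_aff (omAff_mem (B := B) (f := f) (G := G) hL0) t
  simpa using this

lemma om_ge_zeta (hL0 : 0 ≤ L) {r : ℝ} (hr : 0 ≤ r) :
    2 * zeta B f G L r ≤ om B f G L r := by
  apply le_csInf ((omAff_nonempty (B := B) (f := f) (G := G) hL0).image _)
  rintro v ⟨⟨a, b⟩, ⟨ha, hb, hmaj⟩, rfl⟩
  have := hmaj r hr
  simp only [max_eq_left hr] at *
  exact this

lemma om_mono (hL0 : 0 ≤ L) : Monotone (om B f G L) := by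
  intro s t hst
  apply le_csInf ((omAff_nonempty (B := B) (f := f) (G := G) hL0).image _)
  rintro v ⟨⟨a, b⟩, hab, rfl⟩
  calc om B f G L s ≤ a * max s 0 + b := om_le_aff hab s
    _ ≤ a * max t 0 + b := by
        have : max s 0 ≤ max t 0 := max_le_max hst le_rfl
        have ha := hab.1
        nlinarith

/-- Chord inequality: for `0 ≤ t ≤ r`, `t * om r ≤ r * om t`. -/
lemma om_chord (hL0 : 0 ≤ L) {t r : ℝ} (ht : 0 ≤ t) (htr : t ≤ r) :
    t * om B f G L r ≤ r * om B f G L t := by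
  rcases eq_or_lt_of_le (ht.trans htr) with h | hr0
  · have ht0 : t = 0 := le_antisymm (htr.trans h.symm.le) ht
    rw [← h, ht0]
  have : t / r * om B f G L r ≤ om B f G L t := by
    apply le_csInf ((omAff_nonempty (B := B) (f := f) (G := G) hL0).image _)
    rintro v ⟨⟨a, b⟩, hab, rfl⟩
    have h1 : om B f G L r ≤ a * max r 0 + b := om_le_aff hab r
    have h2 : t / r * (a * max r 0 + b) ≤ a * max t 0 + b := by
      rw [max_eq_left (le_of_lt hr0), max_eq_left ht]
      rw [div_mul_eq_mul_div, div_le_iff₀ hr0]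
      have hb := hab.2.1
      nlinarith
    calc t / r * om B f G L r ≤ t / r * (a * max r 0 + b) := by
          apply mul_le_mul_of_nonneg_left h1 (by positivity)
      _ ≤ a * max t 0 + b := h2
  calc t * om B f G L r = r * (t / r * om B f G L r) := by field_simp
    _ ≤ r * om B f G L t := mul_le_mul_of_nonneg_left this (le_of_lt hr0)

lemma om_subadd (hL0 : 0 ≤ L) {s t : ℝ} (hs : 0 ≤ s) (ht : 0 ≤ t) :
    om B f G L (s + t) ≤ om B f G L s + om B f G L t := by
  rcases eq_or_lt_of_le (by linarith : (0:ℝ) ≤ s + t) with h | hpos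
  · have hs0 : s = 0 := by linarith
    have ht0 : t = 0 := by linarith
    subst hs0; subst ht0
    have h0 := om_nonneg (B := B) (f := f) (G := G) hL0 0
    simp only [add_zero]
    linarith
  have h1 := om_chord (B := B) (f := f) (G := G) hL0 hs (by linarith : s ≤ s + t)
  have h2 := om_chord (B := B) (f := f) (G := G) hL0 ht (by linarith : t ≤ s + t)
  nlinarith

/-- `om 0 = 0`; requires positivity of `eta`, i.e. the (SCW¹) hypothesis. -/
lemma om_zero_le (hL0 : 0 ≤ L)
    (hC : ∀ x ∈ B, ∀ y ∈ B, f x ≥ f y + ⟪G y, x - y⟫)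
    (hSCW1 : ∀ x y : ℕ → X, (∀ n, x n ∈ B) → (∀ n, y n ∈ B) →
      Tendsto (fun n => f (x n) - f (y n) - ⟪G (y n), x n - y n⟫) atTop (nhds 0) →
      Tendsto (fun n => G (x n) - G (y n)) atTop (nhds 0))
    {ε : ℝ} (hε : 0 < ε) : ∃ a : ℝ, 0 ≤ a ∧ (a, ε) ∈ omAff B f G L := by
  set s₀ : ℝ := ε / 2 with hs₀def
  have hs₀ : 0 < s₀ := by positivity
  have hη := eta_pos hC hSCW1 hs₀
  set η₀ := eta B f G s₀ with hη₀def
  set r₀ : ℝ := η₀ / (2 * L + 1) with hr₀def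
  have hr₀ : 0 < r₀ := by apply div_pos hη; linarith
  have hane : (0:ℝ) ≤ 4 * L / r₀ := by positivity
  refine ⟨4 * L / r₀, hane, ⟨hane, le_of_lt hε, fun r hr => ?_⟩⟩
  simp only
  rcases le_or_gt r r₀ with hcase | hcase
  · -- small r: zeta r ≤ s₀
    have hz : zeta B f G L r ≤ s₀ := by
      apply zeta_small hC hs₀ hr
      have : 2 * L * r ≤ 2 * L * r₀ := mul_le_mul_of_nonneg_left hcase (by linarith)
      have h2 : 2 * L * r₀ < η₀ := by
        have h2L : (0:ℝ) < 2 * L + 1 := by linarith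
        rw [hr₀def]
        have e : 2 * L * (η₀ / (2*L+1)) = η₀ * (2*L) / (2*L+1) := by ring
        rw [e, div_lt_iff₀ h2L]
        nlinarith
      linarith
    have : (0:ℝ) ≤ 4 * L / r₀ * r := by positivity
    rw [hs₀def] at hz
    linarith
  · -- large r: a * r ≥ 4L ≥ 2 zeta r
    have hz := zeta_le_2L (B := B) (f := f) (G := G) hL0 r
    have : 4 * L ≤ 4 * L / r₀ * r := by
      rw [div_mul_eq_mul_div, le_div_iff₀ hr₀]
      nlinarith
    linarith

lemma om_zero (hL0 : 0 ≤ L)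
    (hC : ∀ x ∈ B, ∀ y ∈ B, f x ≥ f y + ⟪G y, x - y⟫)
    (hSCW1 : ∀ x y : ℕ → X, (∀ n, x n ∈ B) → (∀ n, y n ∈ B) →
      Tendsto (fun n => f (x n) - f (y n) - ⟪G (y n), x n - y n⟫) atTop (nhds 0) →
      Tendsto (fun n => G (x n) - G (y n)) atTop (nhds 0)) :
    om B f G L 0 = 0 := by
  refine le_antisymm ?_ (om_nonneg hL0 0)
  by_contra hpos
  push_neg at hpos
  obtain ⟨a, ha, hmem⟩ := om_zero_le hL0 hC hSCW1 (half_pos hpos)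
  have := om_le_aff hmem 0
  simp at this
  linarith

lemma om_small (hL0 : 0 ≤ L)
    (hC : ∀ x ∈ B, ∀ y ∈ B, f x ≥ f y + ⟪G y, x - y⟫)
    (hSCW1 : ∀ x y : ℕ → X, (∀ n, x n ∈ B) → (∀ n, y n ∈ B) →
      Tendsto (fun n => f (x n) - f (y n) - ⟪G (y n), x n - y n⟫) atTop (nhds 0) →
      Tendsto (fun n => G (x n) - G (y n)) atTop (nhds 0))
    {ε : ℝ} (hε : 0 < ε) : ∃ δ : ℝ, 0 < δ ∧ ∀ t, t ≤ δ → om B f G L t < ε := by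
  obtain ⟨a, ha, hmem⟩ := om_zero_le hL0 hC hSCW1 (half_pos hε)
  refine ⟨ε / (4 * (a + 1)), by positivity, fun t ht => ?_⟩
  have h1 : om B f G L t ≤ a * max t 0 + ε/2 := om_le_aff hmem t
  have h2 : max t 0 ≤ ε / (4 * (a+1)) := by
    apply max_le (by linarith) (by positivity)
  have h3 : a * max t 0 ≤ a * (ε / (4 * (a+1))) := mul_le_mul_of_nonneg_left h2 ha
  have h4 : a * (ε / (4 * (a+1))) < ε / 2 := by
    have e1 : (a+1) * (ε / (4 * (a+1))) = ε / 4 := by field_simp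
    have e2 : a * (ε / (4 * (a+1))) ≤ (a+1) * (ε / (4 * (a+1))) :=
      mul_le_mul_of_nonneg_right (by linarith) (by positivity)
    have e3 : ε / 4 < ε / 2 := by linarith
    linarith
  linarith

lemma om_concaveOn (hL0 : 0 ≤ L) : ConcaveOn ℝ (Ici 0) (om B f G L) := by
  refine ⟨convex_Ici 0, fun x hx y hy α β hα hβ hαβ => ?_⟩
  apply le_csInf ((omAff_nonempty (B := B) (f := f) (G := G) hL0).image _)
  rintro v ⟨⟨a, b⟩, hab, rfl⟩
  simp only [smul_eq_mul] at *
  have hx' : max (α * x + β * y) 0 = α * x + β * y := by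
    apply max_eq_left; have hx0 : (0:ℝ) ≤ x := hx; have hy0 : (0:ℝ) ≤ y := hy; positivity
  have h1 : om B f G L x ≤ a * x + b := by
    have := om_le_aff hab x; rwa [max_eq_left hx] at this
  have h2 : om B f G L y ≤ a * y + b := by
    have := om_le_aff hab y; rwa [max_eq_left hy] at this
  rw [hx']
  have e1 : α * om B f G L x ≤ α * (a * x + b) := mul_le_mul_of_nonneg_left h1 hα
  have e2 : β * om B f G L y ≤ β * (a * y + b) := mul_le_mul_of_nonneg_left h2 hβ
  have e3 : α * (a * x + b) + β * (a * y + b) = a * (α * x + β * y) + b := by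
    linear_combination b * hαβ
  linarith

lemma om_lip (hL0 : 0 ≤ L) {s t : ℝ} (hs : 0 ≤ s) (ht : 0 ≤ t) :
    om B f G L t ≤ om B f G L s + om B f G L |t - s| := by
  rcases le_total s t with h | h
  · rw [abs_of_nonneg (by linarith : (0:ℝ) ≤ t - s)]
    have h2 := om_subadd (B := B) (f := f) (G := G) hL0 hs (by linarith : (0:ℝ) ≤ t - s)
    simpa using h2
  · have := om_mono (B := B) (f := f) (G := G) hL0 h
    have hn := om_nonneg (B := B) (f := f) (G := G) hL0 |t - s|
    linarith

lemma om_continuousOn (hL0 : 0 ≤ L)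
    (hC : ∀ x ∈ B, ∀ y ∈ B, f x ≥ f y + ⟪G y, x - y⟫)
    (hSCW1 : ∀ x y : ℕ → X, (∀ n, x n ∈ B) → (∀ n, y n ∈ B) →
      Tendsto (fun n => f (x n) - f (y n) - ⟪G (y n), x n - y n⟫) atTop (nhds 0) →
      Tendsto (fun n => G (x n) - G (y n)) atTop (nhds 0)) :
    ContinuousOn (om B f G L) (Ici 0) := by
  rw [Metric.continuousOn_iff]
  intro x hx ε hε
  obtain ⟨δ, hδ, hδε⟩ := om_small (B := B) (f := f) (G := G) hL0 hC hSCW1 hε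
  refine ⟨δ, hδ, fun y hy hdist => ?_⟩
  have hx0 : (0:ℝ) ≤ x := hx
  have hy0 : (0:ℝ) ≤ y := hy
  have hd : |y - x| ≤ δ := by
    rw [Real.dist_eq] at hdist; linarith [le_of_lt hdist]
  have h1 := om_lip (B := B) (f := f) (G := G) hL0 hx0 hy0
  have h2 := om_lip (B := B) (f := f) (G := G) hL0 hy0 hx0
  have h3 : om B f G L |y - x| < ε := hδε _ hd
  have h4 : om B f G L |x - y| < ε := by rwa [abs_sub_comm]
  rw [Real.dist_eq, abs_lt]
  constructor <;> [linarith; linarith]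

end OmLemmas


section PhiLemmas

variable {X : Type*} [NormedAddCommGroup X] [InnerProductSpace ℝ X]
variable {B : Set X} {f : X → ℝ} {G : X → X} {L : ℝ}

lemma om_intervalIntegrable (hL0 : 0 ≤ L) (a b : ℝ) :
    IntervalIntegrable (om B f G L) MeasureTheory.volume a b :=
  (om_mono (B := B) (f := f) (G := G) hL0).intervalIntegrable

lemma phi_zero : phi B f G L 0 = 0 := intervalIntegral.integral_same

lemma phi_sub (hL0 : 0 ≤ L) (a b : ℝ) :
    phi B f G L b - phi B f G L a = ∫ s in a..b, om B f G L s := by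
  have := intervalIntegral.integral_add_adjacent_intervals
    (om_intervalIntegrable (B := B) (f := f) (G := G) hL0 0 a)
    (om_intervalIntegrable (B := B) (f := f) (G := G) hL0 a b)
  unfold phi
  linarith

lemma phi_mono (hL0 : 0 ≤ L) {a b : ℝ} (hab : a ≤ b) :
    phi B f G L a ≤ phi B f G L b := by
  have h := phi_sub (B := B) (f := f) (G := G) hL0 a b
  have h2 : 0 ≤ ∫ s in a..b, om B f G L s :=
    intervalIntegral.integral_nonneg hab (fun u _ => om_nonneg hL0 u)
  linarith

lemma phi_nonneg (hL0 : 0 ≤ L) {r : ℝ} (hr : 0 ≤ r) : 0 ≤ phi B f G L r := by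
  have := phi_mono (B := B) (f := f) (G := G) hL0 hr
  rwa [phi_zero] at this

lemma phi_diff_le (hL0 : 0 ≤ L) {a b : ℝ} (hab : a ≤ b) :
    phi B f G L b - phi B f G L a ≤ (b - a) * om B f G L b := by
  rw [phi_sub (B := B) (f := f) (G := G) hL0 a b]
  have h1 : (∫ s in a..b, om B f G L s) ≤ ∫ _ in a..b, om B f G L b := by
    apply intervalIntegral.integral_mono_on hab
      (om_intervalIntegrable hL0 a b) intervalIntegrable_const
    intro x hx
    exact om_mono hL0 hx.2
  rw [intervalIntegral.integral_const, smul_eq_mul] at h1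
  exact h1

lemma phi_lb (hL0 : 0 ≤ L) {r : ℝ} (hr : 0 ≤ r) :
    r * om B f G L r ≤ 2 * phi B f G L r := by
  rcases eq_or_lt_of_le hr with h | hr0
  · rw [← h, phi_zero]; simp
  have key : (∫ s in (0:ℝ)..r, s * (om B f G L r / r)) ≤ ∫ s in (0:ℝ)..r, om B f G L s := by
    apply intervalIntegral.integral_mono_on (le_of_lt hr0)
      (by apply Continuous.intervalIntegrable; continuity)
      (om_intervalIntegrable hL0 0 r)
    intro x hx
    have hchord := om_chord (B := B) (f := f) (G := G) hL0 hx.1 hx.2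
    rw [mul_div_assoc'] at *
    rw [div_le_iff₀ hr0]
    linarith
  have e1 : (∫ s in (0:ℝ)..r, s * (om B f G L r / r)) = r * om B f G L r / 2 := by
    rw [intervalIntegral.integral_mul_const, integral_id]
    field_simp
    ring
  have e2 : (∫ s in (0:ℝ)..r, om B f G L s) = phi B f G L r := rfl
  rw [e1, e2] at key
  linarith

lemma phi_pair (hL0 : 0 ≤ L) {c d : ℝ} (hc : 0 ≤ c) (hd : 0 ≤ d) :
    (phi B f G L (c + 2*d) - phi B f G L (c + d)) - (phi B f G L (c + d) - phi B f G L c)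
      ≤ d * om B f G L d := by
  rw [phi_sub (B := B) (f := f) (G := G) hL0 (c+d) (c+2*d),
      phi_sub (B := B) (f := f) (G := G) hL0 c (c+d)]
  have hshift : (∫ s in (c+d)..(c+2*d), om B f G L s)
      = ∫ s in c..(c+d), om B f G L (s + d) := by
    rw [intervalIntegral.integral_comp_add_right (fun s => om B f G L s) d]
    norm_num
    ring_nf
  rw [hshift]
  have hint1 : IntervalIntegrable (fun s => om B f G L (s + d)) MeasureTheory.volume c (c+d) := by
    have hm : Monotone (fun s => om B f G L (s + d)) :=
      fun u v huv => om_mono hL0 (by linarith)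
    exact hm.intervalIntegrable
  rw [← intervalIntegral.integral_sub hint1 (om_intervalIntegrable hL0 c (c+d))]
  have : (∫ s in c..(c+d), (om B f G L (s + d) - om B f G L s))
      ≤ ∫ _ in c..(c+d), om B f G L d := by
    apply intervalIntegral.integral_mono_on (by linarith)
      (hint1.sub (om_intervalIntegrable hL0 c (c+d))) intervalIntegrable_const
    intro x hx
    have := om_subadd (B := B) (f := f) (G := G) hL0 (le_trans hc hx.1) hd
    linarith
  rw [intervalIntegral.integral_const, smul_eq_mul] at this
  calc (∫ s in c..(c+d), (om B f G L (s + d) - om B f G L s)) ≤ (c + d - c) * om B f G L d := this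
    _ = d * om B f G L d := by ring_nf

end PhiLemmas


section SymLemmas

variable {X : Type*} [NormedAddCommGroup X] [InnerProductSpace ℝ X]
variable {B : Set X} {f : X → ℝ} {G : X → X} {L : ℝ}

lemma cross_bound (hL0 : 0 ≤ L) {a b c t : ℝ} (ha : 0 ≤ a) (ht : 0 ≤ t)
    (hc0 : 0 ≤ c) (hcb : c ≤ b) (hb : b ≤ a + t)
    (hsq : b^2 + c^2 ≤ 2*a^2 + 2*t^2) :
    (b + c - 2*a) * om B f G L b ≤ 4 * (t * om B f G L t) := by
  have homb : 0 ≤ om B f G L b := om_nonneg hL0 b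
  have homt : 0 ≤ om B f G L t := om_nonneg hL0 t
  rcases le_or_gt (b + c) (2*a) with hneg | hpos
  · have h1 : (b + c - 2*a) * om B f G L b ≤ 0 :=
      mul_nonpos_of_nonpos_of_nonneg (by linarith) homb
    have h2 : (0:ℝ) ≤ 4 * (t * om B f G L t) := by positivity
    linarith
  rcases le_or_gt a t with hat | hta
  · -- a ≤ t : b ≤ 2t, b+c-2a ≤ 2t
    have hb2t : b ≤ 2*t := by linarith
    have h1 : om B f G L b ≤ om B f G L (2*t) := om_mono hL0 hb2t
    have h2 : om B f G L (2*t) ≤ 2 * om B f G L t := by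
      have := om_subadd (B := B) (f := f) (G := G) hL0 ht ht
      have e : t + t = 2*t := by ring
      rw [e] at this; linarith
    have h3 : b + c - 2*a ≤ 2*t := by linarith
    calc (b + c - 2*a) * om B f G L b ≤ (2*t) * om B f G L b := by nlinarith
      _ ≤ (2*t) * (2 * om B f G L t) := by nlinarith
      _ = 4 * (t * om B f G L t) := by ring
  · -- t < a
    have ha0 : 0 < a := lt_of_le_of_lt ht hta
    have hkey : b + c ≤ 2*a + t^2/a := by
      have h1 : (b+c)^2 ≤ 2*(b^2+c^2) := by nlinarith [sq_nonneg (b - c)]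
      have h2 : (b+c)^2 ≤ (2*a + t^2/a)^2 := by
        have e : (2*a + t^2/a)^2 = 4*a^2 + 4*t^2 + (t^2/a)^2 := by field_simp; ring
        rw [e]; nlinarith [sq_nonneg (t^2/a)]
      have hy : (0:ℝ) ≤ 2*a + t^2/a := by positivity
      exact (pow_le_pow_iff_left₀ (by linarith : (0:ℝ) ≤ b + c) hy two_ne_zero).1 h2
    have hb2a : b ≤ 2*a := by linarith
    have h1 : om B f G L b ≤ om B f G L (2*a) := om_mono hL0 hb2a
    have h2 : om B f G L (2*a) ≤ 2 * om B f G L a := by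
      have := om_subadd (B := B) (f := f) (G := G) hL0 ha ha
      have e : a + a = 2*a := by ring
      rw [e] at this; linarith
    have h3 : t * om B f G L a ≤ a * om B f G L t :=
      om_chord hL0 ht (le_of_lt hta)
    have homa : 0 ≤ om B f G L a := om_nonneg hL0 a
    -- (b+c-2a) * om b ≤ (t²/a) * (2 om a) = (2t/a)*(t * om a) ≤ (2t/a)*(a * om t) = 2 t om t
    have s1 : (b + c - 2*a) * om B f G L b ≤ (t^2/a) * om B f G L b := by
      apply mul_le_mul_of_nonneg_right (by linarith) homb
    have s2 : (t^2/a) * om B f G L b ≤ (t^2/a) * (2 * om B f G L a) := by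
      apply mul_le_mul_of_nonneg_left (by linarith) (by positivity)
    have s3 : (t^2/a) * (2 * om B f G L a) ≤ 2 * (t * om B f G L t) := by
      rw [div_mul_eq_mul_div, div_le_iff₀ ha0]
      nlinarith
    nlinarith
  
lemma phi_sym_core (hL0 : 0 ≤ L) {a b c t : ℝ} (ha : 0 ≤ a) (ht : 0 ≤ t)
    (hc0 : 0 ≤ c) (hcb : c ≤ b) (hb : b ≤ a + t) (hcge : a - t ≤ c)
    (hbc2a : 2*a ≤ b + c) (hsq : b^2 + c^2 ≤ 2*a^2 + 2*t^2) :
    phi B f G L b + phi B f G L c - 2 * phi B f G L a ≤ 5 * (t * om B f G L t) := by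
  have homt : 0 ≤ om B f G L t := om_nonneg hL0 t
  have hcross := cross_bound (B := B) (f := f) (G := G) hL0 ha ht hc0 hcb hb hsq
  rcases le_or_gt b a with hba | hab
  · -- both b, c ≤ a
    have h1 : phi B f G L b ≤ phi B f G L a := phi_mono hL0 hba
    have h2 : phi B f G L c ≤ phi B f G L a := phi_mono hL0 (le_trans hcb hba)
    nlinarith
  rcases le_or_gt a c with hac | hca
  · -- a ≤ c ≤ b
    have h1 : phi B f G L b - phi B f G L a ≤ (b - a) * om B f G L b := phi_diff_le hL0 (le_of_lt hab)
    have h2 : phi B f G L c - phi B f G L a ≤ (c - a) * om B f G L c := phi_diff_le hL0 hac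
    have h3 : om B f G L c ≤ om B f G L b := om_mono hL0 hcb
    have homb : 0 ≤ om B f G L b := om_nonneg hL0 b
    have h4 : (c - a) * om B f G L c ≤ (c - a) * om B f G L b :=
      mul_le_mul_of_nonneg_left h3 (by linarith)
    have h5 : (b - a) * om B f G L b + (c - a) * om B f G L b = (b + c - 2*a) * om B f G L b := by
      ring
    nlinarith
  · -- c < a < b
    set d := a - c with hddef
    have hd0 : 0 ≤ d := by linarith
    have hdt : d ≤ t := by linarith
    have hpair := phi_pair (B := B) (f := f) (G := G) hL0 hc0 hd0
    have e1 : c + d = a := by rw [hddef]; ring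
    have e2 : c + 2*d = a + d := by rw [hddef]; ring
    rw [e1, e2] at hpair
    -- hpair : (phi (a+d) - phi a) - (phi a - phi c) ≤ d * om d
    have hadb : a + d ≤ b := by linarith
    have h2 : phi B f G L b - phi B f G L (a + d) ≤ (b - (a+d)) * om B f G L b :=
      phi_diff_le hL0 hadb
    have hdd : d * om B f G L d ≤ t * om B f G L t := by
      have := om_mono (B := B) (f := f) (G := G) hL0 hdt
      have h0 : 0 ≤ om B f G L d := om_nonneg hL0 d
      nlinarith
    have e3 : (b - (a+d)) * om B f G L b = (b + c - 2*a) * om B f G L b := by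
      rw [hddef]; ring
    nlinarith

lemma phi_sym_aux (hL0 : 0 ≤ L) (u h : X) (hle : ‖u - h‖ ≤ ‖u + h‖) :
    phi B f G L ‖u + h‖ + phi B f G L ‖u - h‖ - 2 * phi B f G L ‖u‖
      ≤ 5 * (‖h‖ * om B f G L ‖h‖) := by
  apply phi_sym_core hL0 (norm_nonneg u) (norm_nonneg h) (norm_nonneg _) hle
    (norm_add_le u h) ?_ ?_ ?_
  · exact norm_sub_norm_le u h
  · calc 2*‖u‖ = ‖(u+h)+(u-h)‖ := by
          have e : (u+h)+(u-h) = (2:ℝ) • u := by module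
          rw [e, norm_smul]; simp
      _ ≤ ‖u+h‖ + ‖u-h‖ := norm_add_le _ _
  · simp only [pow_two]
    linarith [parallelogram_law_with_norm ℝ u h]

lemma phi_sym (hL0 : 0 ≤ L) (u h : X) :
    phi B f G L ‖u + h‖ + phi B f G L ‖u - h‖ - 2 * phi B f G L ‖u‖
      ≤ 5 * (‖h‖ * om B f G L ‖h‖) := by
  rcases le_total ‖u - h‖ ‖u + h‖ with hle | hle
  · exact phi_sym_aux hL0 u h hle
  · have h2 : ‖u - -h‖ ≤ ‖u + -h‖ := by
      rw [sub_neg_eq_add, ← sub_eq_add_neg]; exact hle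
    have := phi_sym_aux (B := B) (f := f) (G := G) hL0 u (-h) h2
    rw [sub_neg_eq_add, ← sub_eq_add_neg, norm_neg] at this
    linarith

end SymLemmas


section GLemmas

variable {X : Type*} [NormedAddCommGroup X] [InnerProductSpace ℝ X]
variable {B : Set X} {f : X → ℝ} {G : X → X} {L : ℝ}

lemma phi_lip (hL0 : 0 ≤ L) {a b : ℝ} :
    phi B f G L b - phi B f G L a ≤ (4*L+1) * |b - a| := by
  rcases le_total a b with hab | hab
  · have h1 := phi_diff_le (B := B) (f := f) (G := G) hL0 hab
    have h2 := om_bound (B := B) (f := f) (G := G) hL0 b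
    have h3 : 0 ≤ om B f G L b := om_nonneg hL0 b
    rw [abs_of_nonneg (by linarith : (0:ℝ) ≤ b - a)]
    nlinarith
  · have h1 := phi_mono (B := B) (f := f) (G := G) hL0 hab
    have h2 : (0:ℝ) ≤ (4*L+1) * |b - a| := by positivity
    linarith

/-- The key Whitney-type inequality: every affine minorant from a point of `B`
lies below every candidate function in the infimum defining `g`. -/
lemma whitney (hL0 : 0 ≤ L) (hGL : ∀ z ∈ B, ‖G z‖ ≤ L)
    (hC : ∀ x ∈ B, ∀ y ∈ B, f x ≥ f y + ⟪G y, x - y⟫)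
    {z y : X} (hz : z ∈ B) (hy : y ∈ B) (x : X) :
    f z + ⟪G z, x - z⟫ ≤ f y + ⟪G y, x - y⟫ + phi B f G L ‖x - y‖ := by
  set s : ℝ := ‖G z - G y‖ with hsdef
  set r : ℝ := ‖x - y‖ with hrdef
  have hgap : 0 ≤ f y - f z - ⟪G z, y - z⟫ := gap_nonneg hC hy hz
  have hiden : f z + ⟪G z, x - z⟫ - (f y + ⟪G y, x - y⟫)
      = -(f y - f z - ⟪G z, y - z⟫) + ⟪G z - G y, x - y⟫ := by
    have e : x - z = (x - y) + (y - z) := by abel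
    rw [e, inner_add_right, inner_sub_left]
    ring
  have hip : ⟪G z - G y, x - y⟫ ≤ s * r := by
    calc ⟪G z - G y, x - y⟫ ≤ ‖G z - G y‖ * ‖x - y‖ := real_inner_le_norm _ _
      _ = s * r := rfl
  have hphir : 0 ≤ phi B f G L r := phi_nonneg hL0 (norm_nonneg _)
  have hmain : s * r ≤ (f y - f z - ⟪G z, y - z⟫) + phi B f G L r := by
    rcases eq_or_lt_of_le (norm_nonneg (G z - G y)) with hs0 | hs :  _
    · rw [← hsdef] at hs0
      rw [← hs0]
      simp only [zero_mul]
      linarith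
    rw [← hsdef] at hs
    rcases le_or_gt (s * r) (eta B f G s) with hle | hgt
    · have := eta_le_gap hC hy hz (le_of_eq (norm_sub_rev (G z) (G y)))
      linarith
    · have hr0 : 0 < r := by
        rcases eq_or_lt_of_le (norm_nonneg (x - y)) with h0 | h
        · exfalso
          rw [← hrdef] at h0
          rw [← h0] at hgt
          simp at hgt
          have := eta_nonneg (B := B) (f := f) (G := G) hC s
          linarith
        · rw [← hrdef] at h; exact h
      have hs2L : s ≤ 2 * L := by
        have h1 := hGL z hz
        have h2 := hGL y hy
        calc s ≤ ‖G z‖ + ‖G y‖ := norm_sub_le _ _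
          _ ≤ 2 * L := by linarith
      have hζ : s ≤ zeta B f G L r := le_zeta hL0 hs hs2L (le_of_lt hgt)
      have hω : 2 * zeta B f G L r ≤ om B f G L r := om_ge_zeta hL0 (le_of_lt hr0)
      have hφ : r * om B f G L r ≤ 2 * phi B f G L r := phi_lb hL0 (le_of_lt hr0)
      have : 2 * (s * r) ≤ r * om B f G L r := by nlinarith
      linarith
  linarith

lemma gfun_nonempty_image (hne : B.Nonempty) (x : X) :
    ((fun y => f y + ⟪G y, x - y⟫ + phi B f G L ‖x - y‖) '' B).Nonempty :=
  hne.image _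

lemma gfun_bddBelow (hL0 : 0 ≤ L) (hGL : ∀ z ∈ B, ‖G z‖ ≤ L)
    (hC : ∀ x ∈ B, ∀ y ∈ B, f x ≥ f y + ⟪G y, x - y⟫)
    {z : X} (hz : z ∈ B) (x : X) :
    (f z + ⟪G z, x - z⟫) ∈ lowerBounds ((fun y => f y + ⟪G y, x - y⟫ + phi B f G L ‖x - y‖) '' B) := by
  rintro v ⟨y, hy, rfl⟩
  exact whitney hL0 hGL hC hz hy x

lemma g_le (hL0 : 0 ≤ L) (hGL : ∀ z ∈ B, ‖G z‖ ≤ L)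
    (hC : ∀ x ∈ B, ∀ y ∈ B, f x ≥ f y + ⟪G y, x - y⟫)
    {y : X} (hy : y ∈ B) (x : X) :
    gfun B f G L x ≤ f y + ⟪G y, x - y⟫ + phi B f G L ‖x - y‖ :=
  csInf_le ⟨_, gfun_bddBelow hL0 hGL hC hy x⟩ ⟨y, hy, rfl⟩

lemma g_ge (hL0 : 0 ≤ L) (hGL : ∀ z ∈ B, ‖G z‖ ≤ L)
    (hC : ∀ x ∈ B, ∀ y ∈ B, f x ≥ f y + ⟪G y, x - y⟫)
    (hne : B.Nonempty) {z : X} (hz : z ∈ B) (x : X) :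
    f z + ⟪G z, x - z⟫ ≤ gfun B f G L x :=
  le_csInf (gfun_nonempty_image hne x) (gfun_bddBelow hL0 hGL hC hz x)

lemma g_le_f (hL0 : 0 ≤ L) (hGL : ∀ z ∈ B, ‖G z‖ ≤ L)
    (hC : ∀ x ∈ B, ∀ y ∈ B, f x ≥ f y + ⟪G y, x - y⟫)
    {x : X} (hx : x ∈ B) : gfun B f G L x ≤ f x := by
  have := g_le hL0 hGL hC hx x
  simp only [sub_self, inner_zero_right, norm_zero] at this
  rw [phi_zero] at this
  linarith

lemma g_sym (hL0 : 0 ≤ L) (hGL : ∀ z ∈ B, ‖G z‖ ≤ L)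
    (hC : ∀ x ∈ B, ∀ y ∈ B, f x ≥ f y + ⟪G y, x - y⟫)
    (hne : B.Nonempty) (x h : X) :
    gfun B f G L (x + h) + gfun B f G L (x - h)
      ≤ 2 * gfun B f G L x + 5 * (‖h‖ * om B f G L ‖h‖) := by
  apply le_of_forall_pos_le_add
  intro ε hε
  have hlt : sInf ((fun y => f y + ⟪G y, x - y⟫ + phi B f G L ‖x - y‖) '' B)
      < gfun B f G L x + ε/2 := lt_add_of_pos_right _ (half_pos hε)
  obtain ⟨v, ⟨y, hy, rfl⟩, hvlt⟩ := exists_lt_of_csInf_lt (gfun_nonempty_image hne x) hlt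
  simp only at hvlt
  have h1 := g_le hL0 hGL hC hy (x + h)
  have h2 := g_le hL0 hGL hC hy (x - h)
  have e1 : x + h - y = (x - y) + h := by abel
  have e2 : x - h - y = (x - y) - h := by abel
  rw [e1] at h1
  rw [e2] at h2
  have hsym := phi_sym (B := B) (f := f) (G := G) hL0 (x - y) h
  have einner : ⟪G y, (x - y) + h⟫ + ⟪G y, (x - y) - h⟫ = 2 * ⟪G y, x - y⟫ := by
    simp only [inner_add_right, inner_sub_right]
    ring
  linarith

lemma g_lip (hL0 : 0 ≤ L) (hGL : ∀ z ∈ B, ‖G z‖ ≤ L)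
    (hC : ∀ x ∈ B, ∀ y ∈ B, f x ≥ f y + ⟪G y, x - y⟫)
    (hne : B.Nonempty) (x x' : X) :
    gfun B f G L x' ≤ gfun B f G L x + (5*L+1) * ‖x' - x‖ := by
  apply le_of_forall_pos_le_add
  intro ε hε
  have hlt : sInf ((fun y => f y + ⟪G y, x - y⟫ + phi B f G L ‖x - y‖) '' B)
      < gfun B f G L x + ε := lt_add_of_pos_right _ hε
  obtain ⟨v, ⟨y, hy, rfl⟩, hvlt⟩ := exists_lt_of_csInf_lt (gfun_nonempty_image hne x) hlt
  simp only at hvlt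
  have h1 := g_le hL0 hGL hC hy x'
  have hiner : ⟪G y, x' - y⟫ - ⟪G y, x - y⟫ ≤ L * ‖x' - x‖ := by
    have e : (x' - y) - (x - y) = x' - x := by abel
    have h2 : ⟪G y, x' - y⟫ - ⟪G y, x - y⟫ = ⟪G y, x' - x⟫ := by
      rw [← inner_sub_right, e]
    rw [h2]
    calc ⟪G y, x' - x⟫ ≤ ‖G y‖ * ‖x' - x‖ := real_inner_le_norm _ _
      _ ≤ L * ‖x' - x‖ := mul_le_mul_of_nonneg_right (hGL y hy) (norm_nonneg _)
  have hphi : phi B f G L ‖x' - y‖ - phi B f G L ‖x - y‖ ≤ (4*L+1) * ‖x' - x‖ := by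
    have h3 := phi_lip (B := B) (f := f) (G := G) (a := ‖x - y‖) (b := ‖x' - y‖) hL0
    have h4 : |‖x' - y‖ - ‖x - y‖| ≤ ‖x' - x‖ := by
      have e : (x' - y) - (x - y) = x' - x := by abel
      have := abs_norm_sub_norm_le (x' - y) (x - y)
      rwa [e] at this
    have h5 : (4*L+1) * |‖x' - y‖ - ‖x - y‖| ≤ (4*L+1) * ‖x' - x‖ :=
      mul_le_mul_of_nonneg_left h4 (by linarith)
    linarith
  linarith

end GLemmas


section FLemmas

variable {X : Type*} [NormedAddCommGroup X] [InnerProductSpace ℝ X]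
variable {B : Set X} {f : X → ℝ} {G : X → X} {L : ℝ}

lemma comb_mem_self (x : X) : gfun B f G L x ∈ CombSet B f G L x := by
  classical
  refine ⟨{x}, fun p => if p = x then 1 else 0, ?_, ?_, ?_, ?_, ?_⟩
  · intro p; dsimp only; split <;> norm_num
  · intro p hp
    dsimp only
    rw [if_neg]
    intro hpx
    exact hp (by simp [hpx])
  · simp
  · simp
  · simp

lemma combSet_nonempty (x : X) : (CombSet B f G L x).Nonempty := ⟨_, comb_mem_self x⟩

lemma comb_ge (hL0 : 0 ≤ L) (hGL : ∀ z ∈ B, ‖G z‖ ≤ L)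
    (hC : ∀ x ∈ B, ∀ y ∈ B, f x ≥ f y + ⟪G y, x - y⟫) (hne : B.Nonempty)
    {x : X} {r : ℝ} (hr : r ∈ CombSet B f G L x) {z : X} (hz : z ∈ B) :
    f z + ⟪G z, x - z⟫ ≤ r := by
  obtain ⟨t, w, hw0, hout, hw1, hwx, rfl⟩ := hr
  have key : ∀ p ∈ t, w p * (f z + ⟪G z, p - z⟫) ≤ w p * gfun B f G L p := fun p _ =>
    mul_le_mul_of_nonneg_left (g_ge hL0 hGL hC hne hz p) (hw0 p)
  have expand : ∑ p ∈ t, w p * (f z + ⟪G z, p - z⟫)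
      = (∑ p ∈ t, w p) * (f z - ⟪G z, z⟫) + ⟪G z, ∑ p ∈ t, w p • p⟫ := by
    rw [inner_sum, Finset.sum_mul, ← Finset.sum_add_distrib]
    apply Finset.sum_congr rfl
    intro p _
    rw [real_inner_smul_right, inner_sub_right]
    ring
  have e2 : (∑ p ∈ t, w p * (f z + ⟪G z, p - z⟫)) = f z + ⟪G z, x - z⟫ := by
    rw [expand, hw1, hwx, inner_sub_right]; ring
  calc f z + ⟪G z, x - z⟫ = ∑ p ∈ t, w p * (f z + ⟪G z, p - z⟫) := e2.symm
    _ ≤ ∑ p ∈ t, w p * gfun B f G L p := Finset.sum_le_sum key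

lemma combSet_bddBelow (hL0 : 0 ≤ L) (hGL : ∀ z ∈ B, ‖G z‖ ≤ L)
    (hC : ∀ x ∈ B, ∀ y ∈ B, f x ≥ f y + ⟪G y, x - y⟫) (hne : B.Nonempty)
    (x : X) : BddBelow (CombSet B f G L x) := by
  obtain ⟨z, hz⟩ := hne
  exact ⟨f z + ⟪G z, x - z⟫, fun r hr => comb_ge hL0 hGL hC ⟨z, hz⟩ hr hz⟩

lemma F_le_g (hL0 : 0 ≤ L) (hGL : ∀ z ∈ B, ‖G z‖ ≤ L)
    (hC : ∀ x ∈ B, ∀ y ∈ B, f x ≥ f y + ⟪G y, x - y⟫) (hne : B.Nonempty)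
    (x : X) : Ffun B f G L x ≤ gfun B f G L x :=
  csInf_le (combSet_bddBelow hL0 hGL hC hne x) (comb_mem_self x)

lemma F_ge (hL0 : 0 ≤ L) (hGL : ∀ z ∈ B, ‖G z‖ ≤ L)
    (hC : ∀ x ∈ B, ∀ y ∈ B, f x ≥ f y + ⟪G y, x - y⟫) (hne : B.Nonempty)
    {z : X} (hz : z ∈ B) (x : X) : f z + ⟪G z, x - z⟫ ≤ Ffun B f G L x :=
  le_csInf (combSet_nonempty x) (fun r hr => comb_ge hL0 hGL hC hne hr hz)

lemma comb_shift (hL0 : 0 ≤ L) (hGL : ∀ z ∈ B, ‖G z‖ ≤ L)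
    (hC : ∀ x ∈ B, ∀ y ∈ B, f x ≥ f y + ⟪G y, x - y⟫) (hne : B.Nonempty)
    {x : X} {r : ℝ} (hr : r ∈ CombSet B f G L x) :
    ∃ (t : Finset X) (w : X → ℝ), (∀ p, 0 ≤ w p) ∧ (∑ p ∈ t, w p) = 1 ∧
      r = (∑ p ∈ t, w p * gfun B f G L p) ∧
      ∀ h' : X, Ffun B f G L (x + h') ≤ ∑ p ∈ t, w p * gfun B f G L (p + h') := by
  classical
  obtain ⟨t, w, hw0, hout, hw1, hwx, rfl⟩ := hr
  refine ⟨t, w, hw0, hw1, rfl, fun h' => ?_⟩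
  have hinj : ∀ a ∈ t, ∀ b ∈ t, a + h' = b + h' → a = b := fun a _ b _ hab => by
    simpa using hab
  have hmem : (∑ p ∈ t, w p * gfun B f G L (p + h')) ∈ CombSet B f G L (x + h') := by
    refine ⟨t.image (· + h'), fun q => if q - h' ∈ t then w (q - h') else 0,
      ?_, ?_, ?_, ?_, ?_⟩
    · intro p; dsimp only; split
      · exact hw0 _
      · exact le_rfl
    · intro p hp
      dsimp only
      rw [if_neg]
      intro hmem'
      exact hp (Finset.mem_image.mpr ⟨p - h', hmem', by abel⟩)
    · rw [Finset.sum_image hinj]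
      rw [show (∑ p ∈ t, (if p + h' - h' ∈ t then w (p + h' - h') else 0)) = ∑ p ∈ t, w p from
        Finset.sum_congr rfl (fun p hp => by simp only [add_sub_cancel_right]; exact if_pos hp)]
      exact hw1
    · rw [Finset.sum_image hinj]
      rw [show (∑ p ∈ t, (if p + h' - h' ∈ t then w (p + h' - h') else 0) • (p + h'))
          = ∑ p ∈ t, w p • (p + h') from
        Finset.sum_congr rfl (fun p hp => by simp only [add_sub_cancel_right]; rw [if_pos hp])]
      have : (∑ p ∈ t, w p • (p + h')) = (∑ p ∈ t, w p • p) + (∑ p ∈ t, w p) • h' := by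
        rw [Finset.sum_smul, ← Finset.sum_add_distrib]
        apply Finset.sum_congr rfl
        intro p _
        rw [smul_add]
      rw [this, hwx, hw1, one_smul]
    · rw [Finset.sum_image hinj]
      apply Finset.sum_congr rfl
      intro p hp
      simp only [add_sub_cancel_right]
      rw [if_pos hp]
  exact csInf_le (combSet_bddBelow hL0 hGL hC hne (x + h')) hmem

lemma F_sym (hL0 : 0 ≤ L) (hGL : ∀ z ∈ B, ‖G z‖ ≤ L)
    (hC : ∀ x ∈ B, ∀ y ∈ B, f x ≥ f y + ⟪G y, x - y⟫) (hne : B.Nonempty)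
    (x h : X) :
    Ffun B f G L (x + h) + Ffun B f G L (x - h)
      ≤ 2 * Ffun B f G L x + 5 * (‖h‖ * om B f G L ‖h‖) := by
  apply le_of_forall_pos_le_add
  intro ε hε
  have hlt : sInf (CombSet B f G L x) < Ffun B f G L x + ε/2 :=
    lt_add_of_pos_right _ (half_pos hε)
  obtain ⟨r, hrmem, hrlt⟩ := exists_lt_of_csInf_lt (combSet_nonempty x) hlt
  obtain ⟨t, w, hw0, hw1, hrval, hFle⟩ := comb_shift hL0 hGL hC hne hrmem
  have h1 := hFle h
  have h2 := hFle (-h)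
  rw [← sub_eq_add_neg] at h2
  have hsum : (∑ p ∈ t, w p * gfun B f G L (p + h)) + ∑ p ∈ t, w p * gfun B f G L (p + -h)
      ≤ ∑ p ∈ t, w p * (2 * gfun B f G L p + 5 * (‖h‖ * om B f G L ‖h‖)) := by
    rw [← Finset.sum_add_distrib]
    apply Finset.sum_le_sum
    intro p _
    rw [← mul_add]
    apply mul_le_mul_of_nonneg_left _ (hw0 p)
    have := g_sym hL0 hGL hC hne p h
    rw [← sub_eq_add_neg]
    linarith
  have hval : (∑ p ∈ t, w p * (2 * gfun B f G L p + 5 * (‖h‖ * om B f G L ‖h‖)))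
      = 2 * r + 5 * (‖h‖ * om B f G L ‖h‖) := by
    rw [show (∑ p ∈ t, w p * (2 * gfun B f G L p + 5 * (‖h‖ * om B f G L ‖h‖)))
        = (∑ p ∈ t, (2 * (w p * gfun B f G L p) + w p * (5 * (‖h‖ * om B f G L ‖h‖)))) from
      Finset.sum_congr rfl (fun p _ => by ring)]
    rw [Finset.sum_add_distrib, ← Finset.mul_sum, ← Finset.sum_mul, hw1, ← hrval]
    ring
  rw [hval] at hsum
  have h2' : Ffun B f G L (x - h) ≤ ∑ p ∈ t, w p * gfun B f G L (p + -h) := h2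
  have := add_le_add h1 h2'
  linarith

lemma F_lip (hL0 : 0 ≤ L) (hGL : ∀ z ∈ B, ‖G z‖ ≤ L)
    (hC : ∀ x ∈ B, ∀ y ∈ B, f x ≥ f y + ⟪G y, x - y⟫) (hne : B.Nonempty)
    (x y : X) : Ffun B f G L y ≤ Ffun B f G L x + (5*L+1) * ‖y - x‖ := by
  apply le_of_forall_pos_le_add
  intro ε hε
  have hlt : sInf (CombSet B f G L x) < Ffun B f G L x + ε :=
    lt_add_of_pos_right _ hε
  obtain ⟨r, hrmem, hrlt⟩ := exists_lt_of_csInf_lt (combSet_nonempty x) hlt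
  obtain ⟨t, w, hw0, hw1, hrval, hFle⟩ := comb_shift hL0 hGL hC hne hrmem
  have h1 := hFle (y - x)
  rw [add_sub_cancel] at h1
  have hsum : (∑ p ∈ t, w p * gfun B f G L (p + (y - x)))
      ≤ ∑ p ∈ t, w p * (gfun B f G L p + (5*L+1) * ‖y - x‖) := by
    apply Finset.sum_le_sum
    intro p _
    apply mul_le_mul_of_nonneg_left _ (hw0 p)
    have := g_lip hL0 hGL hC hne p (p + (y - x))
    rw [add_sub_cancel_left] at this
    linarith
  have hval : (∑ p ∈ t, w p * (gfun B f G L p + (5*L+1) * ‖y - x‖))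
      = r + (5*L+1) * ‖y - x‖ := by
    rw [show (∑ p ∈ t, w p * (gfun B f G L p + (5*L+1) * ‖y - x‖))
        = (∑ p ∈ t, (w p * gfun B f G L p + w p * ((5*L+1) * ‖y - x‖))) from
      Finset.sum_congr rfl (fun p _ => by ring)]
    rw [Finset.sum_add_distrib, ← Finset.sum_mul, hw1, ← hrval]
    ring
  rw [hval] at hsum
  linarith

lemma F_convex (hL0 : 0 ≤ L) (hGL : ∀ z ∈ B, ‖G z‖ ≤ L)
    (hC : ∀ x ∈ B, ∀ y ∈ B, f x ≥ f y + ⟪G y, x - y⟫) (hne : B.Nonempty) :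
    ConvexOn ℝ univ (Ffun B f G L) := by
  refine ⟨convex_univ, fun x _ y _ a b ha hb hab => ?_⟩
  classical
  apply le_of_forall_pos_le_add
  intro ε hε
  have hltx : sInf (CombSet B f G L x) < Ffun B f G L x + ε/2 :=
    lt_add_of_pos_right _ (half_pos hε)
  have hlty : sInf (CombSet B f G L y) < Ffun B f G L y + ε/2 :=
    lt_add_of_pos_right _ (half_pos hε)
  obtain ⟨r, ⟨t, w, hw0, hout, hw1, hwx, hrval⟩, hrlt⟩ :=
    exists_lt_of_csInf_lt (combSet_nonempty x) hltx
  obtain ⟨s, ⟨t', w', hw0', hout', hw1', hwx', hsval⟩, hslt⟩ :=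
    exists_lt_of_csInf_lt (combSet_nonempty y) hlty
  have hsub : t ⊆ t ∪ t' := Finset.subset_union_left
  have hsub' : t' ⊆ t ∪ t' := Finset.subset_union_right
  -- helper to extend sums
  have ext1 : ∀ (ψ : X → ℝ), (∑ p ∈ t ∪ t', w p * ψ p) = ∑ p ∈ t, w p * ψ p := by
    intro ψ
    exact (Finset.sum_subset hsub (fun p _ hp => by rw [hout p hp, zero_mul])).symm
  have ext1' : ∀ (ψ : X → ℝ), (∑ p ∈ t ∪ t', w' p * ψ p) = ∑ p ∈ t', w' p * ψ p := by
    intro ψ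
    exact (Finset.sum_subset hsub' (fun p _ hp => by rw [hout' p hp, zero_mul])).symm
  have extv : (∑ p ∈ t ∪ t', w p • p) = ∑ p ∈ t, w p • p := by
    exact (Finset.sum_subset hsub (fun p _ hp => by rw [hout p hp, zero_smul])).symm
  have extv' : (∑ p ∈ t ∪ t', w' p • p) = ∑ p ∈ t', w' p • p := by
    exact (Finset.sum_subset hsub' (fun p _ hp => by rw [hout' p hp, zero_smul])).symm
  have exts : (∑ p ∈ t ∪ t', w p) = ∑ p ∈ t, w p := by
    exact (Finset.sum_subset hsub (fun p _ hp => hout p hp)).symm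
  have exts' : (∑ p ∈ t ∪ t', w' p) = ∑ p ∈ t', w' p := by
    exact (Finset.sum_subset hsub' (fun p _ hp => hout' p hp)).symm
  have hmem : (a * r + b * s) ∈ CombSet B f G L (a • x + b • y) := by
    refine ⟨t ∪ t', fun p => a * w p + b * w' p, ?_, ?_, ?_, ?_, ?_⟩
    · intro p
      have := hw0 p; have := hw0' p
      positivity
    · intro p hp
      dsimp only
      rw [hout p (fun h => hp (hsub h)), hout' p (fun h => hp (hsub' h))]
      ring
    · rw [Finset.sum_add_distrib]
      rw [← Finset.mul_sum, ← Finset.mul_sum, exts, exts', hw1, hw1']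
      simpa using hab
    · rw [show (∑ p ∈ t ∪ t', (a * w p + b * w' p) • p)
          = (∑ p ∈ t ∪ t', (a • (w p • p) + b • (w' p • p))) from
        Finset.sum_congr rfl (fun p _ => by rw [add_smul, mul_smul, mul_smul])]
      rw [Finset.sum_add_distrib, ← Finset.smul_sum, ← Finset.smul_sum, extv, extv', hwx, hwx']
    · rw [show (∑ p ∈ t ∪ t', (a * w p + b * w' p) * gfun B f G L p)
          = (∑ p ∈ t ∪ t', (a * (w p * gfun B f G L p) + b * (w' p * gfun B f G L p))) from
        Finset.sum_congr rfl (fun p _ => by ring)]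
      rw [Finset.sum_add_distrib, ← Finset.mul_sum, ← Finset.mul_sum,
        ext1 (gfun B f G L), ext1' (gfun B f G L), ← hrval, ← hsval]
  have hF : Ffun B f G L (a • x + b • y) ≤ a * r + b * s :=
    csInf_le (combSet_bddBelow hL0 hGL hC hne _) hmem
  have h1 : a * r ≤ a * (Ffun B f G L x + ε/2) :=
    mul_le_mul_of_nonneg_left (le_of_lt hrlt) ha
  have h2 : b * s ≤ b * (Ffun B f G L y + ε/2) :=
    mul_le_mul_of_nonneg_left (le_of_lt hslt) hb
  have : a * (Ffun B f G L x + ε/2) + b * (Ffun B f G L y + ε/2)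
      = a * Ffun B f G L x + b * Ffun B f G L y + ε/2 := by
    have : a + b = 1 := hab
    nlinarith [this]
  simp only [smul_eq_mul]
  linarith

end FLemmas


section SmoothCriterion

variable {X : Type*} [NormedAddCommGroup X] [InnerProductSpace ℝ X]

/-- one-sided difference quotient -/
noncomputable def Dq (F : X → ℝ) (x u : X) (t : ℝ) : ℝ := (F (x + t • u) - F x) / t

noncomputable def Df (F : X → ℝ) (x u : X) : ℝ := sInf ((fun t => Dq F x u t) '' Ioi (0:ℝ))

variable {F : X → ℝ} {κ : ℝ → ℝ}

lemma slope_mono (hconv : ConvexOn ℝ univ F) {x u : X} {s t : ℝ}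
    (hs : 0 < s) (hst : s ≤ t) : Dq F x u s ≤ Dq F x u t := by
  have ht : 0 < t := lt_of_lt_of_le hs hst
  have htne : t ≠ 0 := ne_of_gt ht
  have ha : (0:ℝ) ≤ 1 - s/t := by
    rw [sub_nonneg, div_le_one ht]; exact hst
  have hb : (0:ℝ) ≤ s/t := by positivity
  have hcomb := hconv.2 (mem_univ x) (mem_univ (x + t • u)) ha hb (by ring)
  have hpt : (1 - s/t) • x + (s/t) • (x + t • u) = x + s • u := by
    have e : (s/t) * t = s := div_mul_cancel₀ s htne
    rw [smul_add, smul_smul, e, ← add_assoc, ← add_smul]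
    norm_num
  rw [hpt] at hcomb
  have key : t * F (x + s • u) ≤ (t - s) * F x + s * F (x + t • u) := by
    have e1 : t * ((1 - s/t) • F x + (s/t) • F (x + t • u))
        = (t - s) * F x + s * F (x + t • u) := by
      simp only [smul_eq_mul]
      field_simp
    have h2 := mul_le_mul_of_nonneg_left hcomb (le_of_lt ht)
    rw [e1] at h2
    exact h2
  rw [Dq, Dq, div_le_div_iff₀ hs ht]
  nlinarith

lemma slope_sum_nonneg (hconv : ConvexOn ℝ univ F) {x u : X} {s t : ℝ}
    (hs : 0 < s) (ht : 0 < t) : 0 ≤ Dq F x u t + Dq F x (-u) s := by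
  have hst : 0 < s + t := by linarith
  set lam := s / (s + t) with hlam
  have hlam0 : 0 ≤ lam := by positivity
  have hlam1 : 0 ≤ 1 - lam := by
    rw [hlam, sub_nonneg, div_le_one hst]; linarith
  have hcomb := hconv.2 (mem_univ (x + t • u)) (mem_univ (x + s • (-u))) hlam0 hlam1 (by ring)
  have hpt : lam • (x + t • u) + (1 - lam) • (x + s • (-u)) = x := by
    have hlts : lam * t = (1 - lam) * s := by
      rw [hlam]; field_simp; ring
    have e : lam • (x + t • u) + (1 - lam) • (x + s • (-u))
        = (lam + (1 - lam)) • x + ((lam * t) • u - ((1 - lam) * s) • u) := by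
      simp only [smul_add, smul_smul, smul_neg, add_smul, sub_smul]
      abel
    rw [e, hlts]
    simp
  rw [hpt] at hcomb
  simp only [smul_eq_mul] at hcomb
  set F1 := F (x + t • u) with hF1
  set F2 := F (x + s • (-u)) with hF2
  have e1 : lam * (s + t) = s := by rw [hlam]; field_simp
  have e2 : (1 - lam) * (s + t) = t := by rw [hlam]; field_simp; ring
  have h3 := mul_le_mul_of_nonneg_left hcomb (le_of_lt hst)
  have e3 : (s + t) * (lam * F1 + (1 - lam) * F2) = s * F1 + t * F2 := by
    linear_combination F1 * e1 + F2 * e2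
  rw [e3] at h3
  simp only [Dq]
  rw [div_add_div _ _ (ne_of_gt ht) (ne_of_gt hs), le_div_iff₀ (by positivity : (0:ℝ) < t * s)]
  rw [← hF1, ← hF2]
  nlinarith [h3]

lemma DSet_nonempty (F : X → ℝ) (x u : X) :
    ((fun t => Dq F x u t) '' Ioi (0:ℝ)).Nonempty :=
  ⟨Dq F x u 1, 1, mem_Ioi.mpr one_pos, rfl⟩

lemma DSet_bddBelow (hconv : ConvexOn ℝ univ F) (x u : X) :
    BddBelow ((fun t => Dq F x u t) '' Ioi (0:ℝ)) := by
  refine ⟨-Dq F x (-u) 1, ?_⟩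
  rintro v ⟨t, ht, rfl⟩
  have := slope_sum_nonneg hconv (x := x) (u := u) one_pos (mem_Ioi.mp ht)
  linarith

lemma Df_le_Dq (hconv : ConvexOn ℝ univ F) (x u : X) {t : ℝ} (ht : 0 < t) :
    Df F x u ≤ Dq F x u t :=
  csInf_le (DSet_bddBelow hconv x u) ⟨t, mem_Ioi.mpr ht, rfl⟩

lemma neg_Dq_le_Df (hconv : ConvexOn ℝ univ F) (x u : X) {s : ℝ} (hs : 0 < s) :
    -Dq F x (-u) s ≤ Df F x u := by
  apply le_csInf (DSet_nonempty F x u)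
  rintro v ⟨t, ht, rfl⟩
  have := slope_sum_nonneg hconv (x := x) (u := u) hs (mem_Ioi.mp ht)
  linarith

lemma Dq_one (F : X → ℝ) (x u : X) : Dq F x u 1 = F (x + u) - F x := by
  rw [Dq, one_smul, div_one]

lemma Df_le_sub (hconv : ConvexOn ℝ univ F) (x u : X) : Df F x u ≤ F (x + u) - F x := by
  have := Df_le_Dq hconv x u one_pos
  rwa [Dq_one] at this

lemma sub_le_Df (hconv : ConvexOn ℝ univ F) (x u : X) : F x - F (x - u) ≤ Df F x u := by
  have := neg_Dq_le_Df hconv x u one_pos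
  rw [Dq_one] at this
  have e : x + -u = x - u := by abel
  rw [e] at this
  linarith

lemma Dq_half (hconv : ConvexOn ℝ univ F) (x u v : X) {t : ℝ} (ht : 0 < t) :
    Dq F x (u + v) t ≤ Dq F x u (2*t) + Dq F x v (2*t) := by
  have hcomb := hconv.2 (mem_univ (x + (2*t) • u)) (mem_univ (x + (2*t) • v))
    (by norm_num : (0:ℝ) ≤ 1/2) (by norm_num : (0:ℝ) ≤ 1/2) (by norm_num)
  have hpt : (1/2 : ℝ) • (x + (2*t) • u) + (1/2 : ℝ) • (x + (2*t) • v) = x + t • (u + v) := by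
    module
  rw [hpt] at hcomb
  simp only [smul_eq_mul] at hcomb
  rw [Dq, Dq, Dq]
  rw [← add_div, div_le_div_iff₀ ht (by linarith)]
  nlinarith

lemma Df_subadd (hconv : ConvexOn ℝ univ F) (x u v : X) :
    Df F x (u + v) ≤ Df F x u + Df F x v := by
  apply le_of_forall_pos_le_add
  intro ε hε
  obtain ⟨q1, ⟨t1, ht1, rfl⟩, hq1⟩ := exists_lt_of_csInf_lt (DSet_nonempty F x u)
    (lt_add_of_pos_right (Df F x u) (half_pos hε))
  obtain ⟨q2, ⟨t2, ht2, rfl⟩, hq2⟩ := exists_lt_of_csInf_lt (DSet_nonempty F x v)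
    (lt_add_of_pos_right (Df F x v) (half_pos hε))
  rw [mem_Ioi] at ht1 ht2
  set t := min t1 t2 / 2 with htdef
  have ht : 0 < t := by positivity
  have h2t1 : 2 * t ≤ t1 := by
    rw [htdef]; have := min_le_left t1 t2; linarith [min_le_left t1 t2]
  have h2t2 : 2 * t ≤ t2 := by
    rw [htdef]; linarith [min_le_right t1 t2]
  have step := Dq_half hconv x u v ht
  have m1 : Dq F x u (2*t) ≤ Dq F x u t1 := slope_mono hconv (by linarith) h2t1
  have m2 : Dq F x v (2*t) ≤ Dq F x v t2 := slope_mono hconv (by linarith) h2t2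
  have hDf := Df_le_Dq hconv x (u + v) ht
  dsimp only at hq1 hq2
  linarith

lemma Df_zero_eq (hconv : ConvexOn ℝ univ F) (x : X) : Df F x 0 = 0 := by
  have hall : ∀ v ∈ (fun t => Dq F x (0:X) t) '' Ioi (0:ℝ), v = 0 := by
    rintro v ⟨t, ht, rfl⟩
    simp only [Dq]
    rw [smul_zero, add_zero, sub_self, zero_div]
  apply le_antisymm
  · have h1 : Dq F x (0:X) 1 = 0 := hall _ ⟨1, mem_Ioi.mpr one_pos, rfl⟩
    have := Df_le_Dq hconv x (0:X) one_pos
    linarith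
  · apply le_csInf (DSet_nonempty F x 0)
    intro v hv
    rw [hall v hv]

lemma Df_sum_nonneg (hconv : ConvexOn ℝ univ F) (x u : X) :
    0 ≤ Df F x u + Df F x (-u) := by
  have h1 : -Df F x u ≤ Df F x (-u) := by
    apply le_csInf (DSet_nonempty F x (-u))
    rintro v ⟨s, hs, rfl⟩
    have := neg_Dq_le_Df hconv x u (mem_Ioi.mp hs)
    linarith
  linarith

lemma Df_sum_zero (hconv : ConvexOn ℝ univ F)
    (hsym : ∀ x h : X, F (x + h) + F (x - h) ≤ 2 * F x + κ ‖h‖)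
    (hκsmall : ∀ ε : ℝ, 0 < ε → ∃ δ : ℝ, 0 < δ ∧ ∀ s : ℝ, 0 ≤ s → s ≤ δ → κ s ≤ ε * s)
    (x u : X) : Df F x u + Df F x (-u) = 0 := by
  refine le_antisymm ?_ (Df_sum_nonneg hconv x u)
  rcases eq_or_ne u 0 with rfl | hu
  · rw [neg_zero, Df_zero_eq hconv]; simp
  have hun : 0 < ‖u‖ := norm_pos_iff.mpr hu
  apply le_of_forall_pos_le_add
  intro ε hε
  obtain ⟨δ, hδ, hκ⟩ := hκsmall (ε / ‖u‖) (by positivity)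
  set t := δ / ‖u‖ with htdef
  have ht : 0 < t := by positivity
  have h1 := Df_le_Dq hconv x u ht
  have h2 := Df_le_Dq hconv x (-u) ht
  have hsum : Dq F x u t + Dq F x (-u) t ≤ ε := by
    have e1 : x + t • (-u) = x - t • u := by
      rw [smul_neg]; abel
    have hs := hsym x (t • u)
    have enorm : ‖t • u‖ = t * ‖u‖ := by
      rw [norm_smul, Real.norm_eq_abs, abs_of_pos ht]
    have hκb : κ (t * ‖u‖) ≤ (ε / ‖u‖) * (t * ‖u‖) := by
      apply hκ
      · positivity
      · rw [htdef]; field_simp; norm_num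
    have e2 : (ε / ‖u‖) * (t * ‖u‖) = ε * t := by field_simp
    simp only [Dq]
    rw [e1, ← add_div, div_le_iff₀ ht]
    rw [enorm] at hs
    nlinarith
  linarith [add_le_add h1 h2, hsum]

lemma Df_neg_eq (hconv : ConvexOn ℝ univ F)
    (hsym : ∀ x h : X, F (x + h) + F (x - h) ≤ 2 * F x + κ ‖h‖)
    (hκsmall : ∀ ε : ℝ, 0 < ε → ∃ δ : ℝ, 0 < δ ∧ ∀ s : ℝ, 0 ≤ s → s ≤ δ → κ s ≤ ε * s)
    (x u : X) : Df F x (-u) = -Df F x u := by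
  have := Df_sum_zero hconv hsym hκsmall x u
  linarith

lemma Dq_smul (F : X → ℝ) (x u : X) {c t : ℝ} (hc : 0 < c) (ht : 0 < t) :
    Dq F x (c • u) t = c * Dq F x u (c * t) := by
  simp only [Dq]
  rw [smul_smul, mul_comm t c]
  field_simp

lemma Df_smul_pos (hconv : ConvexOn ℝ univ F) (x u : X) {c : ℝ} (hc : 0 < c) :
    Df F x (c • u) = c * Df F x u := by
  apply le_antisymm
  · apply le_of_forall_pos_le_add
    intro ε hε
    obtain ⟨q, ⟨s, hs, rfl⟩, hq⟩ := exists_lt_of_csInf_lt (DSet_nonempty F x u)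
      (lt_add_of_pos_right (Df F x u) (div_pos hε hc))
    rw [mem_Ioi] at hs
    dsimp only at hq
    have hsc : 0 < s / c := by positivity
    have heq : Dq F x (c • u) (s / c) = c * Dq F x u s := by
      rw [Dq_smul F x u hc hsc]
      congr 2
      field_simp
    have := Df_le_Dq hconv x (c • u) hsc
    rw [heq] at this
    have h2 : c * Dq F x u s ≤ c * (Df F x u + ε / c) :=
      mul_le_mul_of_nonneg_left (le_of_lt hq) (le_of_lt hc)
    have h3 : c * (Df F x u + ε / c) = c * Df F x u + ε := by field_simp
    linarith
  · apply le_csInf (DSet_nonempty F x (c • u))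
    rintro v ⟨t, ht, rfl⟩
    rw [mem_Ioi] at ht
    dsimp only
    rw [Dq_smul F x u hc ht]
    have : Df F x u ≤ Dq F x u (c * t) := Df_le_Dq hconv x u (by positivity)
    exact mul_le_mul_of_nonneg_left this (le_of_lt hc)

end SmoothCriterion


section SmoothCriterionB

variable {X : Type*} [NormedAddCommGroup X] [InnerProductSpace ℝ X]
variable {F : X → ℝ} {κ : ℝ → ℝ} {Λ : ℝ}

lemma Df_bound (hconv : ConvexOn ℝ univ F)
    (hlip : ∀ x h : X, F (x + h) ≤ F x + Λ * ‖h‖) (x u : X) :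
    |Df F x u| ≤ Λ * ‖u‖ := by
  rw [abs_le]
  constructor
  · have h1 := sub_le_Df hconv x u
    have h2 := hlip x (-u)
    have e : x + -u = x - u := by abel
    rw [e, norm_neg] at h2
    linarith
  · have h1 := Df_le_sub hconv x u
    have h2 := hlip x u
    linarith

lemma exists_gradvec [CompleteSpace X] (hconv : ConvexOn ℝ univ F)
    (hsym : ∀ x h : X, F (x + h) + F (x - h) ≤ 2 * F x + κ ‖h‖)
    (hκsmall : ∀ ε : ℝ, 0 < ε → ∃ δ : ℝ, 0 < δ ∧ ∀ s : ℝ, 0 ≤ s → s ≤ δ → κ s ≤ ε * s)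
    (hlip : ∀ x h : X, F (x + h) ≤ F x + Λ * ‖h‖) (x : X) :
    ∃ v : X, ∀ h : X, ⟪v, h⟫ = Df F x h := by
  have hadd : ∀ u v : X, Df F x (u + v) = Df F x u + Df F x v := by
    intro u v
    apply le_antisymm (Df_subadd hconv x u v)
    have h1 := Df_subadd hconv x (-u) (-v)
    rw [show -u + -v = -(u+v) from by abel] at h1
    rw [Df_neg_eq hconv hsym hκsmall x (u+v), Df_neg_eq hconv hsym hκsmall x u,
      Df_neg_eq hconv hsym hκsmall x v] at h1
    linarith
  have hsmul : ∀ (c : ℝ) (u : X), Df F x (c • u) = c * Df F x u := by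
    intro c u
    rcases lt_trichotomy c 0 with hcn | rfl | hcp
    · have e : c • u = (-c) • (-u) := by rw [smul_neg, neg_smul, neg_neg]
      rw [e, Df_smul_pos hconv x (-u) (by linarith : (0:ℝ) < -c),
        Df_neg_eq hconv hsym hκsmall x u]
      ring
    · rw [zero_smul, Df_zero_eq hconv]; ring
    · exact Df_smul_pos hconv x u hcp
  let lin : X →ₗ[ℝ] ℝ :=
    { toFun := Df F x
      map_add' := hadd
      map_smul' := fun c u => by simpa using hsmul c u }
  have hbd : ∀ u : X, ‖lin u‖ ≤ Λ * ‖u‖ := fun u => by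
    rw [Real.norm_eq_abs]
    exact Df_bound hconv hlip x u
  let clm : X →L[ℝ] ℝ := LinearMap.mkContinuous lin Λ hbd
  refine ⟨(InnerProductSpace.toDual ℝ X).symm clm, fun h => ?_⟩
  rw [InnerProductSpace.toDual_symm_apply]
  rfl

lemma kappa_nonneg (hconv : ConvexOn ℝ univ F)
    (hsym : ∀ x h : X, F (x + h) + F (x - h) ≤ 2 * F x + κ ‖h‖) (h : X) :
    0 ≤ κ ‖h‖ := by
  have hcomb := hconv.2 (mem_univ ((0:X) + h)) (mem_univ ((0:X) - h))
    (by norm_num : (0:ℝ) ≤ 1/2) (by norm_num : (0:ℝ) ≤ 1/2) (by norm_num)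
  have hpt : (1/2 : ℝ) • ((0:X) + h) + (1/2 : ℝ) • ((0:X) - h) = (0:X) := by module
  rw [hpt] at hcomb
  simp only [smul_eq_mul] at hcomb
  have := hsym 0 h
  linarith

lemma smooth_package [CompleteSpace X] (hconv : ConvexOn ℝ univ F)
    (hsym : ∀ x h : X, F (x + h) + F (x - h) ≤ 2 * F x + κ ‖h‖)
    (hκsmall : ∀ ε : ℝ, 0 < ε → ∃ δ : ℝ, 0 < δ ∧ ∀ s : ℝ, 0 ≤ s → s ≤ δ → κ s ≤ ε * s)
    (hlip : ∀ x h : X, F (x + h) ≤ F x + Λ * ‖h‖) :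
    ∃ g : X → X, (∀ x, HasGradientAt F (g x) x) ∧
      (∀ x h : X, ⟪g x, h⟫ ≤ F (x + h) - F x) ∧
      (∀ x h : X, F (x + h) - F x ≤ ⟪g x, h⟫ + κ ‖h‖) := by
  choose v hv using exists_gradvec hconv hsym hκsmall hlip
  have hlow : ∀ x h : X, ⟪v x, h⟫ ≤ F (x + h) - F x := by
    intro x h
    rw [hv x h]
    exact Df_le_sub hconv x h
  have hup : ∀ x h : X, F (x + h) - F x ≤ ⟪v x, h⟫ + κ ‖h‖ := by
    intro x h
    have h1 := hsym x h
    have h2 := hlow x (-h)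
    rw [inner_neg_right] at h2
    have e : x + -h = x - h := by abel
    rw [e] at h2
    linarith
  refine ⟨v, fun x => ?_, hlow, hup⟩
  rw [hasGradientAt_iff_isLittleO_nhds_zero, Asymptotics.isLittleO_iff]
  intro c hc
  obtain ⟨δ, hδ, hκ⟩ := hκsmall c hc
  rw [Metric.eventually_nhds_iff]
  refine ⟨δ, hδ, fun {h} hdist => ?_⟩
  have hnorm : ‖h‖ < δ := by rwa [dist_zero_right] at hdist
  have h0 : 0 ≤ F (x + h) - F x - ⟪v x, h⟫ := by
    have := hlow x h; linarith
  have h1 : F (x + h) - F x - ⟪v x, h⟫ ≤ κ ‖h‖ := by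
    have := hup x h; linarith
  have h2 : κ ‖h‖ ≤ c * ‖h‖ := hκ _ (norm_nonneg h) (le_of_lt hnorm)
  rw [Real.norm_eq_abs, abs_of_nonneg h0]
  linarith

lemma grad_est
    (hκ0 : ∀ h : X, 0 ≤ κ ‖h‖) {g : X → X}
    (hlow : ∀ x h : X, ⟪g x, h⟫ ≤ F (x + h) - F x)
    (hup : ∀ x h : X, F (x + h) - F x ≤ ⟪g x, h⟫ + κ ‖h‖)
    (x z : X) : ‖g x - g z‖ * ‖x - z‖ ≤ 2 * κ ‖x - z‖ := by
  set v := g x - g z with hvdef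
  set t := ‖x - z‖ with htdef
  rcases eq_or_ne v 0 with hv0 | hvne
  · rw [hv0, norm_zero, zero_mul]
    have := hκ0 (x - z)
    linarith
  have hvn : 0 < ‖v‖ := norm_pos_iff.mpr hvne
  set w := z + (t/‖v‖) • v with hwdef
  have e1 : w - z = (t/‖v‖) • v := by rw [hwdef]; abel
  have ht0 : 0 ≤ t := norm_nonneg _
  have hwz : ‖w - z‖ = t := by
    rw [e1, norm_smul, Real.norm_eq_abs, abs_of_nonneg (by positivity : (0:ℝ) ≤ t/‖v‖)]
    field_simp
  have c1 : ⟪g x, w - x⟫ ≤ F w - F x := by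
    have := hlow x (w - x)
    rwa [add_sub_cancel] at this
  have c2 : ⟪g x, x - z⟫ ≤ F x - F z + κ t := by
    have h1 := hup x (z - x)
    rw [add_sub_cancel] at h1
    have e2 : ‖z - x‖ = t := by rw [htdef, norm_sub_rev]
    rw [e2] at h1
    have e3 : ⟪g x, x - z⟫ = -⟪g x, z - x⟫ := by
      rw [show x - z = -(z - x) from by abel, inner_neg_right]
    rw [e3]; linarith
  have c3 : F w - F z ≤ ⟪g z, w - z⟫ + κ t := by
    have := hup z (w - z)
    rwa [add_sub_cancel, hwz] at this
  have csum : ⟪v, w - z⟫ ≤ 2 * κ t := by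
    have einner : ⟪v, w - z⟫ = (⟪g x, w - x⟫ + ⟪g x, x - z⟫) - ⟪g z, w - z⟫ := by
      rw [hvdef, inner_sub_left, ← inner_add_right,
        show (w - x) + (x - z) = w - z from by abel]
    linarith
  have elhs : ⟪v, w - z⟫ = t * ‖v‖ := by
    rw [e1, real_inner_smul_right, real_inner_self_eq_norm_mul_norm]
    field_simp
  rw [elhs] at csum
  nlinarith [csum]

end SmoothCriterionB

section Main

variable {X : Type*} [NormedAddCommGroup X] [InnerProductSpace ℝ X] [CompleteSpace X]

end Main

/-- sufficiency of (C) and (SCW¹): existence of a convex C^{1,ω} extension. -/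
theorem convex_C1omega_extension_of_C_and_SCW1
    {X : Type*} [NormedAddCommGroup X] [InnerProductSpace ℝ X] [CompleteSpace X]
    (B : Set X) (hB : Bornology.IsBounded B)
    (f : X → ℝ) (G : X → X) (hGbd : ∃ M : ℝ, ∀ z ∈ B, ‖G z‖ ≤ M)
    (hC : ∀ x ∈ B, ∀ y ∈ B, f x ≥ f y + ⟪G y, x - y⟫)
    (hSCW1 : ∀ x y : ℕ → X, (∀ n, x n ∈ B) → (∀ n, y n ∈ B) →
      Tendsto (fun n => f (x n) - f (y n) - ⟪G (y n), x n - y n⟫) atTop (nhds 0) →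
      Tendsto (fun n => G (x n) - G (y n)) atTop (nhds 0)) :
    ∃ (ω : ℝ → ℝ) (M : ℝ) (F : X → ℝ),
      ConcaveOn ℝ (Ici 0) ω ∧ MonotoneOn ω (Ici 0) ∧ ContinuousOn ω (Ici 0) ∧
      ω 0 = 0 ∧ (∀ t, 0 ≤ t → 0 ≤ ω t) ∧ 0 < M ∧
      ConvexOn ℝ univ F ∧ Differentiable ℝ F ∧
      (∀ x ∈ B, F x = f x) ∧ (∀ x ∈ B, gradient F x = G x) ∧
      (∀ x z : X, ‖gradient F x - gradient F z‖ ≤ M * ω ‖x - z‖) := by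
  rcases B.eq_empty_or_nonempty with rfl | hne
  · -- empty body set: take ω = id, F = 0
    refine ⟨id, 1, fun _ => (0:ℝ), ?_, fun a _ b _ hab => hab, continuous_id.continuousOn,
      rfl, fun t ht => ht, one_pos, ?_, differentiable_const 0, ?_, ?_, ?_⟩
    · exact ⟨convex_Ici 0, fun x _ y _ a b _ _ _ => by simp [smul_eq_mul]⟩
    · exact ⟨convex_univ, fun x _ y _ a b _ _ _ => by simp⟩
    · intro x hx; exact absurd hx (Set.notMem_empty x)
    · intro x hx; exact absurd hx (Set.notMem_empty x)
    · intro x z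
      rw [gradient_fun_const, gradient_fun_const]
      simp only [sub_zero, norm_zero, id]
      positivity
  · obtain ⟨M₀, hM₀⟩ := hGbd
    set L : ℝ := max M₀ 0 with hLdef
    have hL0 : (0:ℝ) ≤ L := le_max_right _ _
    have hGL : ∀ z ∈ B, ‖G z‖ ≤ L := fun z hz => le_trans (hM₀ z hz) (le_max_left _ _)
    set ω : ℝ → ℝ := om B f G L with hωdef
    set κ : ℝ → ℝ := fun s => 5 * (s * ω s) with hκdef
    set FF : X → ℝ := Ffun B f G L with hFFdef
    have hconv : ConvexOn ℝ univ FF := F_convex hL0 hGL hC hne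
    have hsym : ∀ x h : X, FF (x + h) + FF (x - h) ≤ 2 * FF x + κ ‖h‖ := fun x h =>
      F_sym hL0 hGL hC hne x h
    have hκsmall : ∀ ε : ℝ, 0 < ε → ∃ δ : ℝ, 0 < δ ∧ ∀ s : ℝ, 0 ≤ s → s ≤ δ → κ s ≤ ε * s := by
      intro ε hε
      obtain ⟨δ, hδ, hδε⟩ := om_small (B := B) (f := f) (G := G) hL0 hC hSCW1
        (show (0:ℝ) < ε/5 by positivity)
      refine ⟨δ, hδ, fun s hs0 hsδ => ?_⟩
      have h1 : ω s < ε/5 := hδε s hsδ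
      have h2 : 0 ≤ ω s := om_nonneg hL0 s
      show 5 * (s * ω s) ≤ ε * s
      nlinarith
    have hlip : ∀ x h : X, FF (x + h) ≤ FF x + (5*L+1) * ‖h‖ := by
      intro x h
      have := F_lip hL0 hGL hC hne x (x + h)
      rwa [add_sub_cancel_left] at this
    obtain ⟨g, hgrad, hlow, hup⟩ := smooth_package hconv hsym hκsmall hlip
    have hκ0 : ∀ h : X, 0 ≤ κ ‖h‖ := kappa_nonneg hconv hsym
    have hFf : ∀ x ∈ B, FF x = f x := by
      intro x hx
      apply le_antisymm
      · exact le_trans (F_le_g hL0 hGL hC hne x) (g_le_f hL0 hGL hC hx)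
      · have := F_ge hL0 hGL hC hne hx x
        simpa using this
    have hgradB : ∀ x ∈ B, g x = G x := by
      intro x hx
      have key : ∀ h : X, ⟪G x - g x, h⟫ ≤ κ ‖h‖ := by
        intro h
        have h1 : f x + ⟪G x, (x + h) - x⟫ ≤ FF (x + h) := F_ge hL0 hGL hC hne hx (x + h)
        rw [add_sub_cancel_left] at h1
        have h2 := hup x h
        rw [hFf x hx] at h2
        rw [inner_sub_left]
        linarith
      have hwzero : G x - g x = 0 := by
        by_contra hw
        have hnw : 0 < ‖G x - g x‖ := norm_pos_iff.mpr hw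
        obtain ⟨δ, hδ, hκs⟩ := hκsmall (‖G x - g x‖/2) (by positivity)
        set h : X := (δ/‖G x - g x‖) • (G x - g x) with hhdef
        have hh : ‖h‖ = δ := by
          rw [hhdef, norm_smul, Real.norm_eq_abs,
            abs_of_nonneg (by positivity : (0:ℝ) ≤ δ/‖G x - g x‖)]
          field_simp
        have hk := key h
        rw [hhdef, real_inner_smul_right, real_inner_self_eq_norm_mul_norm, ← hhdef] at hk
        have hκh : κ ‖h‖ ≤ (‖G x - g x‖/2) * ‖h‖ := hκs _ (norm_nonneg h) (le_of_eq hh)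
        rw [hh] at hκh hk
        have e : δ / ‖G x - g x‖ * (‖G x - g x‖ * ‖G x - g x‖) = δ * ‖G x - g x‖ := by
          field_simp
        rw [e] at hk
        nlinarith
      have := sub_eq_zero.mp hwzero
      exact this.symm
    refine ⟨ω, 10, FF, om_concaveOn hL0, (om_mono hL0).monotoneOn _,
      om_continuousOn hL0 hC hSCW1, om_zero hL0 hC hSCW1,
      fun t _ => om_nonneg hL0 t, by norm_num, hconv,
      fun x => (hgrad x).differentiableAt, hFf, ?_, ?_⟩
    · intro x hx
      rw [(hgrad x).gradient]
      exact hgradB x hx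
    · intro x z
      rw [(hgrad x).gradient, (hgrad z).gradient]
      have hest := grad_est hκ0 hlow hup x z
      rcases eq_or_lt_of_le (norm_nonneg (x - z)) with h0 | hpos
      · have hxz : ‖x - z‖ = 0 := h0.symm
        have : x = z := by
          rw [← sub_eq_zero]
          exact norm_eq_zero.mp hxz
        subst this
        simp only [sub_self, norm_zero]
        have h1 : 0 ≤ ω 0 := om_nonneg hL0 0
        nlinarith
      · have hκval : (2:ℝ) * κ ‖x - z‖ = 10 * (‖x - z‖ * ω ‖x - z‖) := by
          show (2:ℝ) * (5 * (‖x - z‖ * ω ‖x - z‖)) = _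
          ring
        rw [hκval] at hest
        nlinarith [hest, hpos]
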